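/- If λ̲μ is an oriented cup diagram (i.e. λ ⊂ μ), then λ ≤ μ in the Bruhat order on the block. -/

import Mathlib

open scoped Classical

namespace TypeD

/-- A diagrammatic weight of the principal block of type `D_k`:
a `{∧,∨}`-sequence of length `k`, with `true = ∧` and `false = ∨`. -/
abbrev DWeight (k : ℕ) := Fin k → Bool

variable {k : ℕ}

/-- Number of symbols `b` strictly between positions `i` and `j`. -/
noncomputable def between (l : DWeight k) (i j : Fin k) (b : Bool) : ℕ :=
  (Finset.univ.filter fun u : Fin k => i < u ∧ u < j ∧ l u = b).card

/-- Number of symbols `b` in the interval `(i, t]`. -/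
noncomputable def upTo (l : DWeight k) (i t : Fin k) (b : Bool) : ℕ :=
  (Finset.univ.filter fun u : Fin k => i < u ∧ u ≤ t ∧ l u = b).card

/-- `matched l i j` : the positions `i < j` carry `∨∧` and are joined by an
undotted cup in the cup diagram `l̲` (recursive matching of neighboured
`∨∧`-pairs, i.e. bracket matching with `∨ = (` and `∧ = )`). -/
def matched (l : DWeight k) (i j : Fin k) : Prop :=
  i < j ∧ l i = false ∧ l j = true ∧
    between l i j true = between l i j false ∧
    ∀ t, i < t → t < j → upTo l i t true ≤ upTo l i t false

/-- an `∧` not matched by an undotted cup. -/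
def unmatchedUp (l : DWeight k) (i : Fin k) : Prop :=
  l i = true ∧ ¬ ∃ j, matched l j i

/-- a `∨` not matched by an undotted cup. -/
def unmatchedDown (l : DWeight k) (i : Fin k) : Prop :=
  l i = false ∧ ¬ ∃ j, matched l i j

/-- number of unmatched `∧`'s strictly to the left of `i`. -/
noncomputable def upsBefore (l : DWeight k) (i : Fin k) : ℕ :=
  (Finset.univ.filter fun t : Fin k => t < i ∧ unmatchedUp l t).card

/-- undotted cup of the decorated cup diagram `l̲` (rule (C1)). -/
def uCup (l : DWeight k) (i j : Fin k) : Prop := matched l i j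

/-- dotted cup of `l̲`: two consecutive unmatched `∧`'s, paired from the left
(rule (C3)). -/
def dCup (l : DWeight k) (i j : Fin k) : Prop :=
  i < j ∧ unmatchedUp l i ∧ unmatchedUp l j ∧
    (∀ t, i < t → t < j → ¬ unmatchedUp l t) ∧ Even (upsBefore l i)

/-- undotted ray of `l̲` (rule (C2)): at each remaining `∨`. -/
def uRay (l : DWeight k) (i : Fin k) : Prop := unmatchedDown l i

/-- dotted ray of `l̲` (rule (C4)): at the last remaining single `∧`. -/
def dRay (l : DWeight k) (i : Fin k) : Prop :=
  unmatchedUp l i ∧ Even (upsBefore l i) ∧ ∀ t, i < t → ¬ unmatchedUp l t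

/-- `sub l m` (written `l ⊂ m` in the paper): the weight `m`, put on top of the
decorated cup diagram `l̲`, orients every cup and ray of `l̲`:
an undotted cup carries opposite labels, a dotted cup equal labels,
an undotted ray the label `∨`, a dotted ray the label `∧`. -/
def sub (l m : DWeight k) : Prop :=
  (∀ i j, uCup l i j → m i ≠ m j) ∧
  (∀ i j, dCup l i j → m i = m j) ∧
  (∀ i, uRay l i → m i = false) ∧
  (∀ i, dRay l i → m i = true)

lemma sub_refl (l : DWeight k) : sub l l := by
  refine ⟨fun i j h => ?_, fun i j h => ?_, fun i h => ?_, fun i h => ?_⟩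
  · rw [h.2.1, h.2.2.1]; simp
  · rw [h.2.1.1, h.2.2.1.1]
  · exact h.1
  · exact h.1.1

/-- The degree of the oriented cup diagram `l̲ m`: the number of clockwise cups
(an undotted cup is clockwise iff its left endpoint carries `∧`; a dotted cup is
clockwise iff its left endpoint carries `∨`). -/
noncomputable def degCup (l m : DWeight k) : ℕ :=
  ((Finset.univ : Finset (Fin k × Fin k)).filter fun p =>
    (uCup l p.1 p.2 ∧ m p.1 = true) ∨ (dCup l p.1 p.2 ∧ m p.1 = false)).card

/-- The defect (degree of atypicality) of `l`: the number of cups in `l̲`. -/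
noncomputable def defect (l : DWeight k) : ℕ :=
  ((Finset.univ : Finset (Fin k × Fin k)).filter fun p =>
    uCup l p.1 p.2 ∨ dCup l p.1 p.2).card

/-- One basic lowering move in the (reversed) Bruhat order:
swapping a neighboured pair `∧∨` into `∨∧`, or the pair `∨∨` at the first two
positions into `∧∧`. -/
def lowerStep (l m : DWeight k) : Prop :=
  (∃ i j : Fin k, (i : ℕ) + 1 = (j : ℕ) ∧ l i = true ∧ l j = false ∧
      m i = false ∧ m j = true ∧ ∀ t, t ≠ i → t ≠ j → m t = l t) ∨
  (∃ i j : Fin k, (i : ℕ) = 0 ∧ (j : ℕ) = 1 ∧ l i = false ∧ l j = false ∧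
      m i = true ∧ m j = true ∧ ∀ t, t ≠ i → t ≠ j → m t = l t)

/-- `l ≤ m` in the Bruhat order. -/
def bruhatLE (l m : DWeight k) : Prop := Relation.ReflTransGen lowerStep m l

/-- `l < m` in the Bruhat order. -/
def bruhatLT (l m : DWeight k) : Prop := Relation.TransGen lowerStep m l

end TypeD



namespace TypeD

variable {k : ℕ}

noncomputable def Qn (v : DWeight k) (t : ℕ) : ℕ :=
  (Finset.univ.filter fun u : Fin k => (u:ℕ) < t ∧ v u = true).card

lemma Qn_zero (v : DWeight k) : Qn v 0 = 0 := by simp [Qn]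

lemma Qn_le (v : DWeight k) (t : ℕ) : Qn v t ≤ k := by
  calc Qn v t ≤ (Finset.univ : Finset (Fin k)).card := Finset.card_filter_le _ _
  _ = k := by simp

lemma Qn_succ_of_lt (v : DWeight k) {t : ℕ} (h : t < k) :
    Qn v (t+1) = Qn v t + (if v ⟨t, h⟩ = true then 1 else 0) := by
  classical
  unfold Qn
  rw [Finset.card_filter, Finset.card_filter]
  have : (if v ⟨t,h⟩ = true then 1 else 0)
      = ∑ i : Fin k, if i = ⟨t,h⟩ then (if v i = true then 1 else 0) else 0 := by
    rw [Finset.sum_ite_eq' Finset.univ (⟨t,h⟩ : Fin k) (fun i => if v i = true then 1 else 0)]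
    simp
  rw [this, ← Finset.sum_add_distrib]
  apply Finset.sum_congr rfl
  intro u _
  have : u = (⟨t,h⟩ : Fin k) ↔ (u:ℕ) = t := by
    constructor
    · intro hu; rw [hu]
    · intro hu; exact Fin.ext hu
  by_cases hv : v u = true <;> split_ifs with h1 h2 h3 <;>
    simp_all <;> omega

lemma Qn_succ_of_ge (v : DWeight k) {t : ℕ} (h : k ≤ t) :
    Qn v (t+1) = Qn v t := by
  unfold Qn
  congr 1
  apply Finset.filter_congr
  intro u _
  have := u.isLt
  constructor <;> (rintro ⟨h1, h2⟩; exact ⟨by omega, h2⟩)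

lemma Qn_mono (v : DWeight k) {a b : ℕ} (hab : a ≤ b) : Qn v a ≤ Qn v b := by
  apply Finset.card_le_card
  intro u hu
  simp only [Finset.mem_filter] at *
  exact ⟨hu.1, by omega, hu.2.2⟩

lemma Qn_lipschitz (v : DWeight k) {a b : ℕ} (hab : a ≤ b) :
    Qn v b ≤ Qn v a + (b - a) := by
  induction b with
  | zero => simpa [Qn_zero] using Qn_mono v (Nat.le_zero.mp hab)
  | succ n ih =>
    rcases Nat.lt_or_ge a (n+1) with hlt | hge
    · have h1 : a ≤ n := by omega
      by_cases hn : n < k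
      · rw [Qn_succ_of_lt v hn]
        have := ih h1
        split_ifs <;> omega
      · rw [Qn_succ_of_ge v (by omega)]
        have := ih h1
        omega
    · have : a = n+1 := by omega
      subst this; simp

lemma Qn_stable (v : DWeight k) {t : ℕ} (h : k ≤ t) : Qn v t = Qn v k := by
  unfold Qn
  congr 1
  apply Finset.filter_congr
  intro u _
  have := u.isLt
  constructor <;> (rintro ⟨h1, h2⟩; exact ⟨by omega, h2⟩)

lemma Qn_allTrue (v : DWeight k) {a b : ℕ} (hab : a ≤ b) (hbk : b ≤ k)
    (hall : ∀ q (hq : q < k), a ≤ q → q < b → v ⟨q, hq⟩ = true) :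
    Qn v b = Qn v a + (b - a) := by
  induction b with
  | zero => have : a = 0 := by omega
            simp [this]
  | succ n ih =>
    rcases Nat.lt_or_ge a (n+1) with hlt | hge
    · have hnk : n < k := by omega
      rw [Qn_succ_of_lt v hnk, ih (by omega) (by omega)
        (fun q hq h1 h2 => hall q hq h1 (by omega))]
      rw [hall n hnk (by omega) (by omega)]
      simp; omega
    · have : a = n+1 := by omega
      subst this; simp

lemma Qn_ext {v w : DWeight k} (h : ∀ t, t ≤ k → Qn v t = Qn w t) : v = w := by
  funext u
  have h1 := Qn_succ_of_lt v u.isLt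
  have h2 := Qn_succ_of_lt w u.isLt
  have e1 := h u (le_of_lt u.isLt)
  have e2 := h (u+1) u.isLt
  have : (⟨(u:ℕ), u.isLt⟩ : Fin k) = u := Fin.ext rfl
  rw [this] at h1 h2
  rw [e1, e2, h2] at h1
  by_cases hv : v u = true <;> by_cases hw : w u = true <;> simp_all

lemma Qn_update_add (v : DWeight k) (i : Fin k) (b : Bool) (t : ℕ) :
    Qn (Function.update v i b) t + (if (i:ℕ) < t ∧ v i = true then 1 else 0)
      = Qn v t + (if (i:ℕ) < t ∧ b = true then 1 else 0) := by
  classical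
  unfold Qn
  rw [Finset.card_filter, Finset.card_filter]
  rw [← Finset.sum_erase_add _ _ (Finset.mem_univ i),
      ← Finset.sum_erase_add _ (fun u : Fin k => if (u:ℕ) < t ∧ v u = true then 1 else 0) (Finset.mem_univ i)]
  have hcong : ∀ u ∈ Finset.univ.erase i,
      (if (u:ℕ) < t ∧ Function.update v i b u = true then 1 else 0)
        = (if (u:ℕ) < t ∧ v u = true then 1 else 0) := by
    intro u hu
    rw [Function.update_of_ne (Finset.ne_of_mem_erase hu)]
  rw [Finset.sum_congr rfl hcong]
  simp only [Function.update_self]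
  by_cases h1 : (i:ℕ) < t <;> by_cases h2 : v i = true <;> by_cases h3 : b = true <;>
    simp [h1, h2, h3] <;> omega

noncomputable def Fn (v : DWeight k) (t : ℕ) : ℕ :=
  (Finset.univ.filter fun u : Fin k => (u:ℕ) < t ∧ v u = false).card

noncomputable def Dz (v : DWeight k) (t : ℕ) : ℤ := (Fn v t : ℤ) - (Qn v t : ℤ)

lemma count_split_T (l : DWeight k) (a t : Fin k) (hat : a ≤ t) :
    Qn l ((t:ℕ)+1) = Qn l ((a:ℕ)+1) + upTo l a t true := by
  unfold Qn upTo
  rw [← Finset.card_union_of_disjoint]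
  · congr 1
    ext u
    simp only [Finset.mem_filter, Finset.mem_union, Finset.mem_univ, true_and,
      Fin.lt_def, Fin.le_def]
    constructor
    · rintro ⟨h1, h2⟩
      rcases Nat.lt_or_ge (u:ℕ) ((a:ℕ)+1) with h3 | h3
      · exact Or.inl ⟨h3, h2⟩
      · exact Or.inr ⟨by omega, by omega, h2⟩
    · rintro (⟨h1, h2⟩ | ⟨h1, h2, h3⟩)
      · exact ⟨by omega, h2⟩
      · exact ⟨by omega, h3⟩
  · rw [Finset.disjoint_left]
    intro u h1 h2
    simp only [Finset.mem_filter, Finset.mem_univ, true_and, Fin.lt_def, Fin.le_def] at h1 h2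
    omega

lemma count_split_F (l : DWeight k) (a t : Fin k) (hat : a ≤ t) :
    Fn l ((t:ℕ)+1) = Fn l ((a:ℕ)+1) + upTo l a t false := by
  unfold Fn upTo
  rw [← Finset.card_union_of_disjoint]
  · congr 1
    ext u
    simp only [Finset.mem_filter, Finset.mem_union, Finset.mem_univ, true_and,
      Fin.lt_def, Fin.le_def]
    constructor
    · rintro ⟨h1, h2⟩
      rcases Nat.lt_or_ge (u:ℕ) ((a:ℕ)+1) with h3 | h3
      · exact Or.inl ⟨h3, h2⟩
      · exact Or.inr ⟨by omega, by omega, h2⟩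
    · rintro (⟨h1, h2⟩ | ⟨h1, h2, h3⟩)
      · exact ⟨by omega, h2⟩
      · exact ⟨by omega, h3⟩
  · rw [Finset.disjoint_left]
    intro u h1 h2
    simp only [Finset.mem_filter, Finset.mem_univ, true_and, Fin.lt_def, Fin.le_def] at h1 h2
    omega

lemma count_split_T' (l : DWeight k) (a t : Fin k) (hat : a < t) :
    Qn l ((t:ℕ)) = Qn l ((a:ℕ)+1) + between l a t true := by
  unfold Qn between
  rw [← Finset.card_union_of_disjoint]
  · congr 1
    ext u
    simp only [Finset.mem_filter, Finset.mem_union, Finset.mem_univ, true_and,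
      Fin.lt_def, Fin.le_def]
    constructor
    · rintro ⟨h1, h2⟩
      rcases Nat.lt_or_ge (u:ℕ) ((a:ℕ)+1) with h3 | h3
      · exact Or.inl ⟨h3, h2⟩
      · exact Or.inr ⟨by omega, by omega, h2⟩
    · rintro (⟨h1, h2⟩ | ⟨h1, h2, h3⟩)
      · have := a.isLt
        exact ⟨by omega, h2⟩
      · exact ⟨by omega, h3⟩
  · rw [Finset.disjoint_left]
    intro u h1 h2
    simp only [Finset.mem_filter, Finset.mem_univ, true_and, Fin.lt_def, Fin.le_def] at h1 h2
    omega

lemma count_split_F' (l : DWeight k) (a t : Fin k) (hat : a < t) :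
    Fn l ((t:ℕ)) = Fn l ((a:ℕ)+1) + between l a t false := by
  unfold Fn between
  rw [← Finset.card_union_of_disjoint]
  · congr 1
    ext u
    simp only [Finset.mem_filter, Finset.mem_union, Finset.mem_univ, true_and,
      Fin.lt_def, Fin.le_def]
    constructor
    · rintro ⟨h1, h2⟩
      rcases Nat.lt_or_ge (u:ℕ) ((a:ℕ)+1) with h3 | h3
      · exact Or.inl ⟨h3, h2⟩
      · exact Or.inr ⟨by omega, by omega, h2⟩
    · rintro (⟨h1, h2⟩ | ⟨h1, h2, h3⟩)
      · have := a.isLt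
        exact ⟨by omega, h2⟩
      · exact ⟨by omega, h3⟩
  · rw [Finset.disjoint_left]
    intro u h1 h2
    simp only [Finset.mem_filter, Finset.mem_univ, true_and, Fin.lt_def, Fin.le_def] at h1 h2
    omega

lemma Fn_succ_of_lt (v : DWeight k) {t : ℕ} (h : t < k) :
    Fn v (t+1) = Fn v t + (if v ⟨t, h⟩ = false then 1 else 0) := by
  classical
  unfold Fn
  rw [Finset.card_filter, Finset.card_filter]
  have : (if v ⟨t,h⟩ = false then 1 else 0)
      = ∑ i : Fin k, if i = ⟨t,h⟩ then (if v i = false then 1 else 0) else 0 := by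
    rw [Finset.sum_ite_eq' Finset.univ (⟨t,h⟩ : Fin k) (fun i => if v i = false then 1 else 0)]
    simp
  rw [this, ← Finset.sum_add_distrib]
  apply Finset.sum_congr rfl
  intro u _
  have : u = (⟨t,h⟩ : Fin k) ↔ (u:ℕ) = t := by
    constructor
    · intro hu; rw [hu]
    · intro hu; exact Fin.ext hu
  by_cases hv : v u = false <;> split_ifs with h1 h2 h3 <;>
    simp_all <;> omega

lemma Dz_succ (v : DWeight k) {t : ℕ} (h : t < k) :
    Dz v (t+1) = Dz v t + (if v ⟨t, h⟩ = true then -1 else 1) := by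
  unfold Dz
  rw [Qn_succ_of_lt v h, Fn_succ_of_lt v h]
  rcases Bool.eq_false_or_eq_true (v ⟨t, h⟩) with hb | hb <;> simp [hb] <;> ring

/-- from `matched l a b`: the `∨∧`-difference stays above its value at `a`. -/
lemma matched_dz_gt {l : DWeight k} {a b : Fin k} (hm : matched l a b) :
    ∀ x : ℕ, (a:ℕ) < x → x ≤ (b:ℕ) → Dz l (a:ℕ) < Dz l x := by
  obtain ⟨hab, hla, hlb, hbet, hdom⟩ := hm
  have hak : (a:ℕ) < k := a.isLt
  have hbk : (b:ℕ) < k := b.isLt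
  have hDza : Dz l ((a:ℕ)+1) = Dz l (a:ℕ) + 1 := by
    rw [Dz_succ l hak]
    have : (⟨(a:ℕ), hak⟩ : Fin k) = a := Fin.ext rfl
    rw [this, hla]
    simp
  intro x hx1 hx2
  rcases Nat.eq_or_lt_of_le (Nat.succ_le_of_lt hx1) with h1 | h1
  · have hx : x = (a:ℕ) + 1 := by omega
    subst hx
    omega
  · -- x ≥ a+2, use dominance at t = x-1
    have hxk : x - 1 < k := by omega
    set t : Fin k := ⟨x - 1, hxk⟩ with htdef
    have hat : a < t := by
      rw [Fin.lt_def]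
      simp [htdef]
      omega
    have htb : t < b := by
      rw [Fin.lt_def]
      simp [htdef]
      omega
    have hd := hdom t hat htb
    have e1 := count_split_T l a t (le_of_lt hat)
    have e2 := count_split_F l a t (le_of_lt hat)
    have hxt : (t:ℕ) + 1 = x := by simp [htdef]; omega
    rw [hxt] at e1 e2
    unfold Dz at hDza ⊢
    omega

lemma matched_dz_b {l : DWeight k} {a b : Fin k} (hm : matched l a b) :
    Dz l (b:ℕ) = Dz l (a:ℕ) + 1 := by
  obtain ⟨hab, hla, hlb, hbet, hdom⟩ := hm
  have hak : (a:ℕ) < k := a.isLt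
  have hDza : Dz l ((a:ℕ)+1) = Dz l (a:ℕ) + 1 := by
    rw [Dz_succ l hak]
    have : (⟨(a:ℕ), hak⟩ : Fin k) = a := Fin.ext rfl
    rw [this, hla]
    simp
  have e1 := count_split_T' l a b hab
  have e2 := count_split_F' l a b hab
  unfold Dz at hDza ⊢
  omega

lemma matched_dz_bsucc {l : DWeight k} {a b : Fin k} (hm : matched l a b) :
    Dz l ((b:ℕ)+1) = Dz l (a:ℕ) := by
  have h1 := matched_dz_b hm
  have hbk : (b:ℕ) < k := b.isLt
  rw [Dz_succ l hbk]
  have : (⟨(b:ℕ), hbk⟩ : Fin k) = b := Fin.ext rfl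
  rw [this, hm.2.2.1]
  simp
  omega

/-- uniqueness of the matched partner (left). -/
lemma matched_unique_left {l : DWeight k} {a a' b : Fin k}
    (h1 : matched l a b) (h2 : matched l a' b) : a = a' := by
  rcases lt_trichotomy a a' with h | h | h
  · exfalso
    have e1 := matched_dz_b h1
    have e2 := matched_dz_b h2
    have e3 := matched_dz_gt h1 (a':ℕ) (Fin.lt_def.mp h) (le_of_lt (Fin.lt_def.mp h2.1))
    omega
  · exact h
  · exfalso
    have e1 := matched_dz_b h1
    have e2 := matched_dz_b h2
    have e3 := matched_dz_gt h2 (a:ℕ) (Fin.lt_def.mp h) (le_of_lt (Fin.lt_def.mp h1.1))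
    omega

/-- uniqueness of the matched partner (right). -/
lemma matched_unique_right {l : DWeight k} {a b b' : Fin k}
    (h1 : matched l a b) (h2 : matched l a b') : b = b' := by
  rcases lt_trichotomy b b' with h | h | h
  · exfalso
    have e1 := matched_dz_bsucc h1
    have e2 := matched_dz_gt h2 ((b:ℕ)+1) (by have := Fin.lt_def.mp h1.1; omega)
      (by have := Fin.lt_def.mp h; omega)
    omega
  · exact h
  · exfalso
    have e1 := matched_dz_bsucc h2
    have e2 := matched_dz_gt h1 ((b':ℕ)+1) (by have := Fin.lt_def.mp h2.1; omega)
      (by have := Fin.lt_def.mp h; omega)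
    omega

lemma dCup_between {l : DWeight k} {p q : Fin k} (hd : dCup l p q) :
    upsBefore l q = upsBefore l p + 1 := by
  obtain ⟨hpq, hup, huq, hbtw, hev⟩ := hd
  unfold upsBefore
  have hins : (Finset.univ.filter fun t : Fin k => t < q ∧ unmatchedUp l t)
      = insert p (Finset.univ.filter fun t : Fin k => t < p ∧ unmatchedUp l t) := by
    ext t
    simp only [Finset.mem_filter, Finset.mem_insert, Finset.mem_univ, true_and]
    constructor
    · rintro ⟨h1, h2⟩
      rcases lt_trichotomy t p with h3 | h3 | h3
      · exact Or.inr ⟨h3, h2⟩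
      · exact Or.inl h3
      · exact absurd h2 (hbtw t h3 h1)
    · rintro (h1 | ⟨h1, h2⟩)
      · rw [h1]; exact ⟨hpq, hup⟩
      · exact ⟨lt_trans h1 hpq, h2⟩
  rw [hins, Finset.card_insert_of_notMem]
  simp only [Finset.mem_filter, Finset.mem_univ, true_and]
  rintro ⟨h1, _⟩
  exact absurd h1 (lt_irrefl p)

lemma dCup_unique_right {l : DWeight k} {p q q' : Fin k}
    (h1 : dCup l p q) (h2 : dCup l p q') : q = q' := by
  rcases lt_trichotomy q q' with h | h | h
  · exact absurd h1.2.2.1 (h2.2.2.2.1 q h1.1 h)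
  · exact h
  · exact absurd h2.2.2.1 (h1.2.2.2.1 q' h2.1 h)

lemma dCup_unique_left {l : DWeight k} {p p' q : Fin k}
    (h1 : dCup l p q) (h2 : dCup l p' q) : p = p' := by
  rcases lt_trichotomy p p' with h | h | h
  · exact absurd h2.2.1 (h1.2.2.2.1 p' h h2.1)
  · exact h
  · exact absurd h1.2.1 (h2.2.2.2.1 p h h1.1)

lemma dCup_exists_right {l : DWeight k} {u : Fin k} (hu : unmatchedUp l u)
    (hev : Even (upsBefore l u)) (hex : ∃ t, u < t ∧ unmatchedUp l t) :
    ∃ q, dCup l u q := by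
  obtain ⟨t0, ht0, ht0u⟩ := hex
  set S := Finset.univ.filter fun t : Fin k => u < t ∧ unmatchedUp l t with hSdef
  have hS : S.Nonempty := ⟨t0, by simp [hSdef]; exact ⟨ht0, ht0u⟩⟩
  set q := S.min' hS with hqdef
  have hqS : q ∈ S := S.min'_mem hS
  simp only [hSdef, Finset.mem_filter, Finset.mem_univ, true_and] at hqS
  refine ⟨q, hqS.1, hu, hqS.2, ?_, hev⟩
  intro t h1 h2 h3
  have htS : t ∈ S := by simp [hSdef]; exact ⟨h1, h3⟩
  have := S.min'_le t htS
  rw [← hqdef] at this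
  exact absurd h2 (not_lt_of_ge this)

lemma dCup_exists_left {l : DWeight k} {u : Fin k} (hu : unmatchedUp l u)
    (hodd : ¬ Even (upsBefore l u)) : ∃ p, dCup l p u := by
  set S := Finset.univ.filter fun t : Fin k => t < u ∧ unmatchedUp l t with hSdef
  have hcard : S.card = upsBefore l u := rfl
  have hS : S.Nonempty := by
    rw [← Finset.card_pos, hcard]
    by_contra hc
    push_neg at hc
    have : upsBefore l u = 0 := by omega
    rw [this] at hodd
    exact hodd (by simp)
  set p := S.max' hS with hpdef
  have hpS : p ∈ S := S.max'_mem hS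
  simp only [hSdef, Finset.mem_filter, Finset.mem_univ, true_and] at hpS
  have hbtw : ∀ t, p < t → t < u → ¬ unmatchedUp l t := by
    intro t h1 h2 h3
    have htS : t ∈ S := by simp [hSdef]; exact ⟨h2, h3⟩
    have := S.le_max' t htS
    rw [← hpdef] at this
    exact absurd h1 (not_lt_of_ge this)
  have hstep : upsBefore l u = upsBefore l p + 1 := by
    unfold upsBefore
    have hins : (Finset.univ.filter fun t : Fin k => t < u ∧ unmatchedUp l t)
        = insert p (Finset.univ.filter fun t : Fin k => t < p ∧ unmatchedUp l t) := by
      ext t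
      simp only [Finset.mem_filter, Finset.mem_insert, Finset.mem_univ, true_and]
      constructor
      · rintro ⟨h1, h2⟩
        rcases lt_trichotomy t p with h3 | h3 | h3
        · exact Or.inr ⟨h3, h2⟩
        · exact Or.inl h3
        · exact absurd h2 (hbtw t h3 h1)
      · rintro (h1 | ⟨h1, h2⟩)
        · rw [h1]; exact ⟨hpS.1, hpS.2⟩
        · exact ⟨lt_trans h1 hpS.1, h2⟩
    rw [hins, Finset.card_insert_of_notMem]
    · simp only [Finset.mem_filter, Finset.mem_univ, true_and]
      rintro ⟨h1, _⟩
      exact absurd h1 (lt_irrefl p)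
  have hevp : Even (upsBefore l p) := by
    rw [hstep] at hodd
    rcases Nat.even_or_odd (upsBefore l p) with h | h
    · exact h
    · exfalso
      apply hodd
      rcases h with ⟨c, hc⟩
      exact ⟨c+1, by omega⟩
  exact ⟨p, hpS.1, hpS.2, hu, hbtw, hevp⟩

lemma key_counts (l m : DWeight k) (h : sub l m) :
    ∃ d : ℕ, Qn l k = Qn m k + 2*d ∧ ∀ t, Qn l t ≤ Qn m t + 2*d := by
  classical
  obtain ⟨hu, hd, hur, hdr⟩ := h
  set G : Finset (Fin k × Fin k) :=
    Finset.univ.filter (fun p => dCup l p.1 p.2 ∧ m p.1 = false) with hGdef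
  set d := G.card with hddef
  set X : ℕ → Finset (Fin k) := fun t =>
    Finset.univ.filter (fun u => (u:ℕ) < t ∧ l u = true ∧ m u = false) with hXdef
  set Y : ℕ → Finset (Fin k) := fun t =>
    Finset.univ.filter (fun u => (u:ℕ) < t ∧ l u = false ∧ m u = true) with hYdef
  set UC : ℕ → Finset (Fin k) := fun t =>
    Finset.univ.filter (fun u => (u:ℕ) < t ∧ l u = true ∧ m u = false ∧
      ∃ a, matched l a u) with hUCdef
  set DC : ℕ → Finset (Fin k) := fun t =>
    Finset.univ.filter (fun u => (u:ℕ) < t ∧ l u = true ∧ m u = false ∧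
      ¬ ∃ a, matched l a u) with hDCdef
  -- C1
  have hC1 : ∀ t, Qn l t + (Y t).card = Qn m t + (X t).card := by
    intro t
    have e1 : (Finset.univ.filter fun u : Fin k => (u:ℕ) < t ∧ l u = true) ∪ Y t
        = Finset.univ.filter fun u : Fin k => (u:ℕ) < t ∧ (l u = true ∨ m u = true) := by
      ext u
      simp only [hYdef, Finset.mem_filter, Finset.mem_union, Finset.mem_univ, true_and]
      rcases Bool.eq_false_or_eq_true (l u) with hb | hb <;>
        rcases Bool.eq_false_or_eq_true (m u) with hc | hc <;> simp [hb, hc]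
    have e2 : (Finset.univ.filter fun u : Fin k => (u:ℕ) < t ∧ m u = true) ∪ X t
        = Finset.univ.filter fun u : Fin k => (u:ℕ) < t ∧ (l u = true ∨ m u = true) := by
      ext u
      simp only [hXdef, Finset.mem_filter, Finset.mem_union, Finset.mem_univ, true_and]
      rcases Bool.eq_false_or_eq_true (l u) with hb | hb <;>
        rcases Bool.eq_false_or_eq_true (m u) with hc | hc <;> simp [hb, hc]
    have d1 : Disjoint (Finset.univ.filter fun u : Fin k => (u:ℕ) < t ∧ l u = true) (Y t) := by
      rw [Finset.disjoint_left]
      intro u h1 h2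
      simp only [hYdef, Finset.mem_filter, Finset.mem_univ, true_and] at h1 h2
      rw [h1.2] at h2
      simp at h2
    have d2 : Disjoint (Finset.univ.filter fun u : Fin k => (u:ℕ) < t ∧ m u = true) (X t) := by
      rw [Finset.disjoint_left]
      intro u h1 h2
      simp only [hXdef, Finset.mem_filter, Finset.mem_univ, true_and] at h1 h2
      rw [h1.2] at h2
      simp at h2
    have c1 := Finset.card_union_of_disjoint d1
    have c2 := Finset.card_union_of_disjoint d2
    rw [e1] at c1
    rw [e2] at c2
    unfold Qn
    omega
  -- C2
  have hC2 : ∀ t, (X t).card = (UC t).card + (DC t).card := by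
    intro t
    have e : X t = UC t ∪ DC t := by
      ext u
      simp only [hXdef, hUCdef, hDCdef, Finset.mem_filter, Finset.mem_union,
        Finset.mem_univ, true_and]
      by_cases hex : ∃ a, matched l a u <;> tauto
    have dd : Disjoint (UC t) (DC t) := by
      rw [Finset.disjoint_left]
      intro u h1 h2
      simp only [hUCdef, hDCdef, Finset.mem_filter, Finset.mem_univ, true_and] at h1 h2
      exact h2.2.2.2 h1.2.2.2
    rw [e, Finset.card_union_of_disjoint dd]
  -- C3
  have hC3 : ∀ t, (UC t).card ≤ (Y t).card := by
    intro t
    apply Finset.card_le_card_of_injOn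
      (fun u => if hx : ∃ a, matched l a u then hx.choose else u)
    · intro u hmem
      simp only [Finset.mem_coe, hUCdef, Finset.mem_filter, Finset.mem_univ, true_and] at hmem
      obtain ⟨hut, hlu, hmu, hex⟩ := hmem
      beta_reduce
      rw [dif_pos hex, Finset.mem_coe]
      have ha := hex.choose_spec
      simp only [hYdef, Finset.mem_filter, Finset.mem_univ, true_and]
      refine ⟨?_, ha.2.1, ?_⟩
      · have := Fin.lt_def.mp ha.1
        omega
      · have hne := hu _ _ ha
        rcases Bool.eq_false_or_eq_true (m hex.choose) with hb | hb
        · exact hb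
        · exact absurd (by rw [hb, hmu] : m hex.choose = m u) hne
    · intro u1 h1 u2 h2 heq
      simp only [Finset.mem_coe, hUCdef, Finset.mem_filter, Finset.mem_univ, true_and] at h1 h2
      have heq' : (if hx : ∃ a, matched l a u1 then hx.choose else u1)
          = (if hx : ∃ a, matched l a u2 then hx.choose else u2) := heq
      rw [dif_pos h1.2.2.2, dif_pos h2.2.2.2] at heq'
      have ha1 := h1.2.2.2.choose_spec
      have ha2 := h2.2.2.2.choose_spec
      rw [heq'] at ha1
      exact matched_unique_right ha1 ha2
  -- C4
  have hC4 : (Y k).card ≤ (UC k).card := by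
    apply Finset.card_le_card_of_injOn
      (fun u => if hx : ∃ b, matched l u b then hx.choose else u)
    · intro u hmem
      simp only [Finset.mem_coe, hYdef, Finset.mem_filter, Finset.mem_univ, true_and] at hmem
      obtain ⟨hut, hlu, hmu⟩ := hmem
      have hex : ∃ b, matched l u b := by
        by_contra hc
        have : uRay l u := ⟨hlu, hc⟩
        have := hur u this
        rw [hmu] at this
        simp at this
      beta_reduce
      rw [dif_pos hex, Finset.mem_coe]
      have hb := hex.choose_spec
      simp only [hUCdef, Finset.mem_filter, Finset.mem_univ, true_and]
      refine ⟨hex.choose.isLt, hb.2.2.1, ?_, ⟨u, hb⟩⟩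
      · have hne := hu _ _ hb
        rcases Bool.eq_false_or_eq_true (m hex.choose) with hc | hc
        · exact absurd (by rw [hc, hmu] : m u = m hex.choose) hne
        · exact hc
    · intro u1 h1 u2 h2 heq
      simp only [Finset.mem_coe, hYdef, Finset.mem_filter, Finset.mem_univ, true_and] at h1 h2
      have hex1 : ∃ b, matched l u1 b := by
        by_contra hc
        have := hur u1 ⟨h1.2.1, hc⟩
        rw [h1.2.2] at this
        simp at this
      have hex2 : ∃ b, matched l u2 b := by
        by_contra hc
        have := hur u2 ⟨h2.2.1, hc⟩
        rw [h2.2.2] at this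
        simp at this
      have heq' : (if hx : ∃ b, matched l u1 b then hx.choose else u1)
          = (if hx : ∃ b, matched l u2 b then hx.choose else u2) := heq
      rw [dif_pos hex1, dif_pos hex2] at heq'
      have hb1 := hex1.choose_spec
      have hb2 := hex2.choose_spec
      rw [heq'] at hb1
      exact matched_unique_left hb1 hb2
  -- C5
  have hC5 : ∀ t, (DC t).card ≤ 2 * d := by
    intro t
    set DCe := (DC t).filter (fun u => Even (upsBefore l u)) with hDCedef
    set DCo := (DC t).filter (fun u => ¬ Even (upsBefore l u)) with hDCodef
    have hsplit : (DC t).card = DCe.card + DCo.card := by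
      rw [hDCedef, hDCodef]
      exact (Finset.card_filter_add_card_filter_not _).symm
    have he : DCe.card ≤ d := by
      apply Finset.card_le_card_of_injOn
        (fun u => ((u, if hx : ∃ q, dCup l u q then hx.choose else u) : Fin k × Fin k))
      · intro u hmem
        simp only [Finset.mem_coe, hDCedef, hDCdef, Finset.mem_filter, Finset.mem_univ, true_and] at hmem
        obtain ⟨⟨hut, hlu, hmu, hnex⟩, hev⟩ := hmem
        have hum : unmatchedUp l u := ⟨hlu, hnex⟩
        have hex : ∃ q, dCup l u q := by
          apply dCup_exists_right hum hev
          by_contra hc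
          push_neg at hc
          have : dRay l u := ⟨hum, hev, fun t ht => hc t ht⟩
          have := hdr u this
          rw [hmu] at this
          simp at this
        beta_reduce
        rw [dif_pos hex, Finset.mem_coe]
        simp only [hGdef, Finset.mem_filter, Finset.mem_univ, true_and]
        exact ⟨hex.choose_spec, hmu⟩
      · intro u1 h1 u2 h2 heq
        exact congrArg Prod.fst heq
    have ho : DCo.card ≤ d := by
      apply Finset.card_le_card_of_injOn
        (fun u => (((if hx : ∃ p, dCup l p u then hx.choose else u), u) : Fin k × Fin k))
      · intro u hmem
        simp only [Finset.mem_coe, hDCodef, hDCdef, Finset.mem_filter, Finset.mem_univ, true_and] at hmem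
        obtain ⟨⟨hut, hlu, hmu, hnex⟩, hodd⟩ := hmem
        have hum : unmatchedUp l u := ⟨hlu, hnex⟩
        have hex : ∃ p, dCup l p u := dCup_exists_left hum hodd
        beta_reduce
        rw [dif_pos hex, Finset.mem_coe]
        simp only [hGdef, Finset.mem_filter, Finset.mem_univ, true_and]
        refine ⟨hex.choose_spec, ?_⟩
        have := hd _ _ hex.choose_spec
        rw [this, hmu]
      · intro u1 h1 u2 h2 heq
        exact congrArg Prod.snd heq
    omega
  -- C6
  have hC6 : 2 * d ≤ (DC k).card := by
    set I1 := G.image Prod.fst with hI1def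
    set I2 := G.image Prod.snd with hI2def
    have hc1 : I1.card = d := by
      rw [hI1def]
      apply Finset.card_image_of_injOn
      intro x hx y hy hxy
      simp only [Finset.mem_coe, hGdef, Finset.mem_filter, Finset.mem_univ, true_and] at hx hy
      have : x.2 = y.2 := by
        apply dCup_unique_right hx.1
        rw [hxy]
        exact hy.1
      exact Prod.ext hxy this
    have hc2 : I2.card = d := by
      rw [hI2def]
      apply Finset.card_image_of_injOn
      intro x hx y hy hxy
      simp only [Finset.mem_coe, hGdef, Finset.mem_filter, Finset.mem_univ, true_and] at hx hy
      have : x.1 = y.1 := by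
        apply dCup_unique_left hx.1
        rw [hxy]
        exact hy.1
      exact Prod.ext this hxy
    have hdisj : Disjoint I1 I2 := by
      rw [Finset.disjoint_left]
      intro u h1 h2
      simp only [hI1def, hI2def, Finset.mem_image] at h1 h2
      obtain ⟨x, hx, hxu⟩ := h1
      obtain ⟨y, hy, hyu⟩ := h2
      simp only [hGdef, Finset.mem_filter, Finset.mem_univ, true_and] at hx hy
      have hev : Even (upsBefore l u) := by
        rw [← hxu]
        exact hx.1.2.2.2.2
      have hodd : upsBefore l u = upsBefore l y.1 + 1 := by
        rw [← hyu]
        exact dCup_between hy.1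
      have hevy : Even (upsBefore l y.1) := hy.1.2.2.2.2
      rw [hodd] at hev
      rcases hevy with ⟨c, hc⟩
      rcases hev with ⟨c', hc'⟩
      omega
    have hsub : I1 ∪ I2 ⊆ DC k := by
      intro u hmem
      simp only [hI1def, hI2def, Finset.mem_union, Finset.mem_image] at hmem
      simp only [hDCdef, Finset.mem_filter, Finset.mem_univ, true_and]
      rcases hmem with ⟨x, hx, hxu⟩ | ⟨y, hy, hyu⟩
      · simp only [hGdef, Finset.mem_filter, Finset.mem_univ, true_and] at hx
        have hum : unmatchedUp l u := by rw [← hxu]; exact hx.1.2.1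
        refine ⟨u.isLt, hum.1, ?_, hum.2⟩
        rw [← hxu]
        exact hx.2
      · simp only [hGdef, Finset.mem_filter, Finset.mem_univ, true_and] at hy
        have hum : unmatchedUp l u := by rw [← hyu]; exact hy.1.2.2.1
        refine ⟨u.isLt, hum.1, ?_, hum.2⟩
        have := hd _ _ hy.1
        rw [← hyu, ← this]
        exact hy.2
    have := Finset.card_le_card hsub
    rw [Finset.card_union_of_disjoint hdisj, hc1, hc2] at this
    omega
  refine ⟨d, ?_, ?_⟩
  · have := hC1 k
    have := hC2 k
    have h1 : (Y k).card = (UC k).card := le_antisymm hC4 (hC3 k)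
    have h2 : (DC k).card = 2*d := le_antisymm (hC5 k) hC6
    omega
  · intro t
    have := hC1 t
    have := hC2 t
    have := hC3 t
    have := hC5 t
    omega

lemma lowerStep_swap (v : DWeight k) (i j : Fin k) (hij : (i:ℕ)+1 = (j:ℕ))
    (hi : v i = true) (hj : v j = false) :
    lowerStep v (Function.update (Function.update v i false) j true) := by
  have hne : i ≠ j := by intro hh; rw [hh] at hij; omega
  refine Or.inl ⟨i, j, hij, hi, hj, ?_, ?_, ?_⟩
  · rw [Function.update_of_ne hne, Function.update_self]
  · rw [Function.update_self]
  · intro t hti htj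
    rw [Function.update_of_ne htj, Function.update_of_ne hti]

lemma Qn_swap_eq (v : DWeight k) {p₁ p : ℕ} (hp₁ : p₁ < k) (hp : p < k)
    (hpeq : p = p₁ + 1) (hv₁ : v ⟨p₁, hp₁⟩ = true) (hv₂ : v ⟨p, hp⟩ = false) (t : ℕ) :
    Qn (Function.update (Function.update v ⟨p₁, hp₁⟩ false) ⟨p, hp⟩ true) t
      + (if p₁ < t then 1 else 0) = Qn v t + (if p < t then 1 else 0) := by
  have hne : (⟨p₁, hp₁⟩ : Fin k) ≠ ⟨p, hp⟩ := by
    intro hh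
    have : p₁ = p := congrArg Fin.val hh
    omega
  have e1 := Qn_update_add v ⟨p₁, hp₁⟩ false t
  have e2 := Qn_update_add (Function.update v ⟨p₁, hp₁⟩ false) ⟨p, hp⟩ true t
  have hval : (Function.update v ⟨p₁, hp₁⟩ false) ⟨p, hp⟩ = false := by
    rw [Function.update_of_ne (Ne.symm hne)]
    exact hv₂
  rw [hval] at e2
  rw [hv₁] at e1
  simp only [Fin.val_mk, and_true, Bool.false_eq_true, and_false, if_false, if_true] at e1 e2
  by_cases h1 : p₁ < t <;> by_cases h2 : p < t <;>
    simp only [h1, h2, if_true, if_false] at e1 e2 ⊢ <;> omega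

lemma swap_chain (w : DWeight k) : ∀ (N : ℕ) (v : DWeight k),
    (∀ t, t ≤ k → Qn w t ≤ Qn v t) → Qn w k = Qn v k →
    (∑ t ∈ Finset.range (k+1), (Qn v t - Qn w t)) ≤ N →
    Relation.ReflTransGen lowerStep v w := by
  intro N
  induction N with
  | zero =>
    intro v hle heq hsum
    have hall : ∀ t, t ≤ k → Qn v t = Qn w t := by
      intro t ht
      have h0 : Qn v t - Qn w t = 0 :=
        Finset.sum_eq_zero_iff.mp (Nat.le_zero.mp hsum) t (Finset.mem_range.mpr (by omega))
      have := hle t ht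
      omega
    rw [Qn_ext hall]
  | succ N ih =>
    intro v hle heq hsum
    by_cases hvw : ∀ t, t ≤ k → Qn v t = Qn w t
    · rw [Qn_ext hvw]
    · push_neg at hvw
      obtain ⟨tw, htwk, htw⟩ := hvw
      have hex : ∃ t, Qn w t < Qn v t := ⟨tw, lt_of_le_of_ne (hle tw htwk) (Ne.symm htw)⟩
      obtain ⟨t₀, ht₀, ht₀k, ht₀min⟩ :
          ∃ t₀, Qn w t₀ < Qn v t₀ ∧ t₀ ≤ k ∧ ∀ s, s < t₀ → ¬ Qn w s < Qn v s :=
        ⟨Nat.find hex, Nat.find_spec hex,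
          le_trans (Nat.find_min' hex (lt_of_le_of_ne (hle tw htwk) (Ne.symm htw))) htwk,
          fun s hs => Nat.find_min hex hs⟩
      have ht₀pos : 1 ≤ t₀ := by
        rcases Nat.eq_zero_or_pos t₀ with h0 | h0
        · rw [h0, Qn_zero, Qn_zero] at ht₀; omega
        · exact h0
      obtain ⟨t₁, ht₀eq⟩ : ∃ t₁, t₀ = t₁ + 1 := ⟨t₀ - 1, by omega⟩
      have heq₁ : Qn v t₁ = Qn w t₁ :=
        le_antisymm (by have := ht₀min t₁ (by omega); omega) (hle t₁ (by omega))
      have hlip : Qn v t₀ ≤ Qn v t₁ + 1 := by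
        have := Qn_lipschitz v (a := t₁) (b := t₀) (by omega)
        omega
      have hwmono : Qn w t₁ ≤ Qn w t₀ := Qn_mono w (by omega)
      have hQv : Qn v t₀ = Qn v t₁ + 1 := by omega
      have ht₁k : t₁ < k := by
        by_contra hc
        have := Qn_succ_of_ge v (t := t₁) (by omega)
        rw [← ht₀eq] at this
        omega
      have hvt₁ : v ⟨t₁, ht₁k⟩ = true := by
        have hs := Qn_succ_of_lt v ht₁k
        rw [← ht₀eq] at hs
        by_contra hc
        rw [if_neg hc] at hs
        omega
      have hQwt₀ : Qn w t₀ ≤ Qn v t₁ := by omega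
      have hexp : ∃ p, t₁ ≤ p ∧ ∃ hp : p < k, v ⟨p, hp⟩ = false := by
        by_contra hc
        push_neg at hc
        have hall : ∀ q (hq : q < k), t₁ ≤ q → q < k → v ⟨q, hq⟩ = true := by
          intro q hq h1 _
          have := hc q h1 hq
          simp at this
          exact this
        have h1 : Qn v k = Qn v t₁ + (k - t₁) := Qn_allTrue v (by omega) (le_refl k) hall
        have h2 : Qn w k ≤ Qn w t₀ + (k - t₀) := Qn_lipschitz w ht₀k
        omega
      obtain ⟨p, htp, hpk, hvp, hpmin⟩ :
          ∃ p, t₁ ≤ p ∧ ∃ hp : p < k, (v ⟨p, hp⟩ = false) ∧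
            ∀ q, q < p → t₁ ≤ q → ∀ hq : q < k, v ⟨q, hq⟩ = true := by
        refine ⟨Nat.find hexp, (Nat.find_spec hexp).1, (Nat.find_spec hexp).2.1,
          (Nat.find_spec hexp).2.2, ?_⟩
        intro q hq h1 hqk
        have := Nat.find_min hexp hq
        push_neg at this
        have h2 := this h1 hqk
        simp at h2
        exact h2
      have hpt₁ : t₁ < p := by
        rcases Nat.lt_or_ge t₁ p with h1 | h1
        · exact h1
        · exfalso
          have hpe : p = t₁ := by omega
          subst hpe
          have hvf : v ⟨p, ht₁k⟩ = false := hvp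
          rw [hvt₁] at hvf
          simp at hvf
      obtain ⟨p₁, hpeq⟩ : ∃ p₁, p = p₁ + 1 := ⟨p - 1, by omega⟩
      have hp₁k : p₁ < k := by omega
      have hvp₁ : v ⟨p₁, hp₁k⟩ = true := hpmin p₁ (by omega) (by omega) hp₁k
      have hQvp : Qn v p = Qn v t₁ + (p - t₁) :=
        Qn_allTrue v (by omega) (by omega) (fun q hq h1 h2 => hpmin q h2 h1 hq)
      set v' := Function.update (Function.update v ⟨p₁, hp₁k⟩ false) ⟨p, hpk⟩ true with hv'def
      have hstep : lowerStep v v' := lowerStep_swap v ⟨p₁, hp₁k⟩ ⟨p, hpk⟩ (by simp; omega) hvp₁ hvp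
      have hv' : ∀ t, Qn v' t + (if p₁ < t then 1 else 0) = Qn v t + (if p < t then 1 else 0) :=
        Qn_swap_eq v hp₁k hpk hpeq hvp₁ hvp
      have hvne : ∀ t, t ≠ p → Qn v' t = Qn v t := by
        intro t ht
        have := hv' t
        by_cases h1 : p₁ < t <;> by_cases h2 : p < t <;>
          simp only [h1, h2, if_true, if_false] at this <;> omega
      have hvp' : Qn v' p + 1 = Qn v p := by
        have := hv' p
        have h1 : p₁ < p := by omega
        have h2 : ¬ p < p := by omega
        rw [if_pos h1, if_neg h2] at this
        omega
      have hwp : Qn w p + 1 ≤ Qn v p := by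
        have h1 : Qn w p ≤ Qn w t₀ + (p - t₀) := Qn_lipschitz w (by omega)
        omega
      have hle' : ∀ t, t ≤ k → Qn w t ≤ Qn v' t := by
        intro t ht
        by_cases h1 : t = p
        · rw [h1]; omega
        · rw [hvne t h1]; exact hle t ht
      have heq' : Qn w k = Qn v' k := by
        rw [hvne k (by omega)]; exact heq
      have hsum' : (∑ t ∈ Finset.range (k+1), (Qn v' t - Qn w t)) ≤ N := by
        have hpmem : p ∈ Finset.range (k+1) := Finset.mem_range.mpr (by omega)
        have e1 := Finset.sum_erase_add (Finset.range (k+1))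
          (fun t => Qn v t - Qn w t) hpmem
        have e2 := Finset.sum_erase_add (Finset.range (k+1))
          (fun t => Qn v' t - Qn w t) hpmem
        have e3 : (∑ t ∈ (Finset.range (k+1)).erase p, (Qn v' t - Qn w t))
            = ∑ t ∈ (Finset.range (k+1)).erase p, (Qn v t - Qn w t) := by
          apply Finset.sum_congr rfl
          intro t ht
          rw [hvne t (Finset.ne_of_mem_erase ht)]
        rw [e3] at e2
        omega
      exact Relation.ReflTransGen.head hstep (ih v' hle' heq' hsum')

lemma dot_chain : ∀ (d : ℕ) (v w : DWeight k),
    (∀ t, t ≤ k → Qn w t ≤ Qn v t + 2*d) → Qn w k = Qn v k + 2*d →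
    Relation.ReflTransGen lowerStep v w := by
  intro d
  induction d with
  | zero =>
    intro v w hle heq
    exact swap_chain w _ v (fun t ht => by have := hle t ht; omega) (by omega) (le_refl _)
  | succ d ih =>
    intro v w hle heq
    set A := Qn v k with hAdef
    have hwk : Qn w k = A + 2*(d+1) := by omega
    have hAk : A + 2*(d+1) ≤ k := by
      have := Qn_le w k
      omega
    have hk1 : 1 < k := by omega
    have hk0 : 0 < k := by omega
    set L : ℕ → ℕ := fun t => max (Qn w t - 2*(d+1)) (A + t - k) with hLdef
    have hLmono : ∀ a b, a ≤ b → L a ≤ L b := by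
      intro a b hab
      have := Qn_mono w hab
      simp only [hLdef]
      omega
    have hLlip : ∀ t, L (t+1) ≤ L t + 1 := by
      intro t
      have : Qn w (t+1) ≤ Qn w t + 1 := by
        have := Qn_lipschitz w (a := t) (b := t+1) (by omega)
        omega
      simp only [hLdef]
      omega
    have hL0 : L 0 = 0 := by
      have := Qn_zero w
      simp only [hLdef]
      omega
    have hL1 : L 1 = 0 := by
      have : Qn w 1 ≤ 1 := by
        have := Qn_lipschitz w (a := 0) (b := 1) (by omega)
        have := Qn_zero w
        omega
      simp only [hLdef]
      omega
    have hL2 : L 2 = 0 := by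
      have : Qn w 2 ≤ 2 := by
        have := Qn_lipschitz w (a := 0) (b := 2) (by omega)
        have := Qn_zero w
        omega
      simp only [hLdef]
      omega
    have hLk : L k = A := by
      simp only [hLdef]
      omega
    set u : DWeight k := fun x => decide (L ((x:ℕ)+1) = L (x:ℕ) + 1) with hudef
    have hQu : ∀ t, t ≤ k → Qn u t = L t := by
      intro t
      induction t with
      | zero => intro _; rw [Qn_zero, hL0]
      | succ n ihn =>
        intro hn
        have hnk : n < k := by omega
        rw [Qn_succ_of_lt u hnk, ihn (by omega)]
        have hu : u ⟨n, hnk⟩ = decide (L (n+1) = L n + 1) := rfl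
        by_cases hL : L (n+1) = L n + 1
        · rw [hu, decide_eq_true_eq.mpr hL]
          simp
          omega
        · have : L (n+1) = L n := by
            have := hLmono n (n+1) (by omega)
            have := hLlip n
            omega
          rw [hu]
          simp [hL]
          omega
    have hchain1 : Relation.ReflTransGen lowerStep v u := by
      apply swap_chain u _ v ?_ ?_ (le_refl _)
      · intro t ht
        rw [hQu t ht]
        have h1 := hle t ht
        have h2 : A ≤ Qn v t + (k - t) := by
          have := Qn_lipschitz v (a := t) (b := k) ht
          omega
        simp only [hLdef]
        omega
      · rw [hQu k (le_refl k), hLk]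
    have hu0 : u ⟨0, hk0⟩ = false := by
      have hu : u ⟨0, hk0⟩ = decide (L 1 = L 0 + 1) := rfl
      rw [hu, hL1, hL0]
      simp
    have hu1 : u ⟨1, hk1⟩ = false := by
      have hu : u ⟨1, hk1⟩ = decide (L 2 = L 1 + 1) := rfl
      rw [hu, hL2, hL1]
      simp
    have hne : (⟨0, hk0⟩ : Fin k) ≠ ⟨1, hk1⟩ := by
      intro hh
      have : (0:ℕ) = 1 := congrArg Fin.val hh
      omega
    set u₂ := Function.update (Function.update u ⟨0, hk0⟩ true) ⟨1, hk1⟩ true with hu₂def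
    have hstep : lowerStep u u₂ := by
      refine Or.inr ⟨⟨0, hk0⟩, ⟨1, hk1⟩, rfl, rfl, hu0, hu1, ?_, ?_, ?_⟩
      · rw [hu₂def, Function.update_of_ne hne, Function.update_self]
      · rw [hu₂def, Function.update_self]
      · intro t ht0 ht1
        rw [hu₂def, Function.update_of_ne ht1, Function.update_of_ne ht0]
    have hQu₂ : ∀ t, Qn u₂ t = Qn u t + (if 0 < t then 1 else 0) + (if 1 < t then 1 else 0) := by
      intro t
      have e1 := Qn_update_add u ⟨0, hk0⟩ true t
      have e2 := Qn_update_add (Function.update u ⟨0, hk0⟩ true) ⟨1, hk1⟩ true t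
      rw [hu0] at e1
      have hval : (Function.update u ⟨0, hk0⟩ true) ⟨1, hk1⟩ = false := by
        rw [Function.update_of_ne (Ne.symm hne)]
        exact hu1
      rw [hval] at e2
      simp only [Fin.val_mk, and_true, Bool.false_eq_true, and_false, if_false] at e1 e2
      rw [← hu₂def] at e2
      by_cases h0 : 0 < t <;> by_cases h1 : 1 < t <;>
        simp only [h0, h1, if_true, if_false] at e1 e2 ⊢ <;> omega
    have hchain2 : Relation.ReflTransGen lowerStep u₂ w := by
      apply ih u₂ w ?_ ?_
      · intro t ht
        rw [hQu₂ t]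
        rcases Nat.lt_or_ge t 2 with h2 | h2
        · interval_cases t
          · rw [Qn_zero]; omega
          · have : Qn w 1 ≤ 1 := by
              have := Qn_lipschitz w (a := 0) (b := 1) (by omega)
              have := Qn_zero w
              omega
            rw [hQu 1 (by omega), hL1]
            simp
            omega
        · rw [hQu t ht]
          have h1 := hle t ht
          have : L t + 2*(d+1) ≥ Qn w t := by
            simp only [hLdef]
            omega
          simp only [if_pos (by omega : (0:ℕ) < t), if_pos (by omega : (1:ℕ) < t)]
          omega
      · rw [hQu₂ k, hQu k (le_refl k), hLk]
        simp only [if_pos hk0, if_pos hk1]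
        omega
    exact Relation.ReflTransGen.trans hchain1 (Relation.ReflTransGen.head hstep hchain2)

end TypeD

/-! STATEMENT 10: If `λ̲μ` is an oriented cup diagram (i.e. `λ ⊂ μ`), then
`λ ≤ μ` in the Bruhat order on the block. -/
theorem sub_implies_bruhat_le (k : ℕ) (l m : TypeD.DWeight k)
    (h : TypeD.sub l m) : TypeD.bruhatLE l m := by
  obtain ⟨d, heq, hle⟩ := TypeD.key_counts l m h
  exact TypeD.dot_chain d m l (fun t _ => hle t) heq
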